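/- With K as defined by K = λ exp{[1 + C − Q^b[2] − (z² + μ)∑_j r_j]·∏_ℓ ρ(r_ℓ) − C} (where 0 < C < 7/9, λ > 1, b large so that Q^b[2] > 1 + C on L and Q^b[τ] ≥ 0): K(p) ≤ λe^{−C} for all points p outside some compact subset of ℝ^{2n+1}. -/
import Mathlib


noncomputable section

/-- The `n`-torus `T^n`. -/
abbrev Torus (n : ℕ) : Type := Fin n → AddCircle (1 : ℝ)

/-- ℝ^{2n+1} in "polar" coordinates: points `(r, θ, z)` with `θ ∈ T^n`. -/
abbrev P (n : ℕ) : Type := (Fin n → ℝ) × Torus n × ℝ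

/-- `Q^b[2](r,θ) = ∑ᵢ kᵢ(θ)(rᵢ − 2)² + b ∑_{p≠q}(r_p − r_q)²`. -/
def Qb2 (n : ℕ) (k : Fin n → Torus n → ℝ) (b : ℝ)
    (r : Fin n → ℝ) (θ : Torus n) : ℝ :=
  ∑ i, k i θ * (r i - 2) ^ 2 +
    b * ∑ p, ∑ q, if p ≠ q then (r p - r q) ^ 2 else 0

/-- `K = λ exp{[1 + C − Q^b[2] − (z² + μ)∑ rⱼ]·∏ ρ(r_ℓ) − C}`. -/
def Kfun (n : ℕ) (k : Fin n → Torus n → ℝ) (μ : Torus n → ℝ)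
    (ρ : ℝ → ℝ) (lam C b : ℝ) (p : P n) : ℝ :=
  lam * Real.exp
    ((1 + C - Qb2 n k b p.1 p.2.1 - (p.2.2 ^ 2 + μ p.2.1) * ∑ j, p.1 j) *
      (∏ ℓ, ρ (p.1 ℓ)) - C)

/-- The quadratic form underlying `Qb2`. -/
def qf (n : ℕ) (k : Fin n → Torus n → ℝ) (b : ℝ)
    (θ : Torus n) (v : Fin n → ℝ) : ℝ :=
  ∑ i, k i θ * v i ^ 2 + b * ∑ p, ∑ q, if p ≠ q then (v p - v q) ^ 2 else 0

lemma qf_smul (n : ℕ) (k : Fin n → Torus n → ℝ) (b : ℝ)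
    (θ : Torus n) (t : ℝ) (v : Fin n → ℝ) :
    qf n k b θ (t • v) = t ^ 2 * qf n k b θ v := by
  have h1 : ∑ i, k i θ * (t • v) i ^ 2 = t ^ 2 * ∑ i, k i θ * v i ^ 2 := by
    rw [Finset.mul_sum]
    exact Finset.sum_congr rfl fun i _ => by simp [Pi.smul_apply, smul_eq_mul]; ring
  have h2 : ∑ p, ∑ q, (if p ≠ q then ((t • v) p - (t • v) q) ^ 2 else 0)
      = t ^ 2 * ∑ p, ∑ q, (if p ≠ q then (v p - v q) ^ 2 else 0) := by
    rw [Finset.mul_sum]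
    refine Finset.sum_congr rfl fun p _ => ?_
    rw [Finset.mul_sum]
    refine Finset.sum_congr rfl fun q _ => ?_
    by_cases h : p ≠ q <;> simp [h, Pi.smul_apply, smul_eq_mul] <;> ring
  simp only [qf, h1, h2]; ring

lemma qf_cont (n : ℕ) (k : Fin n → Torus n → ℝ) (hk : ∀ i, Continuous (k i)) (b : ℝ) :
    Continuous (fun p : Torus n × (Fin n → ℝ) => qf n k b p.1 p.2) := by
  apply Continuous.add
  · exact continuous_finset_sum _ fun i _ =>
      ((hk i).comp continuous_fst).mul (((continuous_apply i).comp continuous_snd).pow 2)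
  · refine continuous_const.mul (continuous_finset_sum _ fun p _ =>
      continuous_finset_sum _ fun q _ => ?_)
    by_cases h : p ≠ q
    · simp only [if_pos h]
      exact (((continuous_apply p).comp continuous_snd).sub
        ((continuous_apply q).comp continuous_snd)).pow 2
    · simp only [if_neg h]
      exact continuous_const

/-- `K ≤ λe^{−C}` outside some compact subset of ℝ^{2n+1}. -/
theorem K_small_outside_compact (n : ℕ) (hn : 0 < n)
    (k : Fin n → Torus n → ℝ) (hk : ∀ i, Continuous (k i))
    (hsum : ∀ θ, ∑ i, k i θ = 1)
    (μ : Torus n → ℝ) (hμ : Continuous μ) (hμ0 : ∀ θ, 0 ≤ μ θ)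
    (ρ : ℝ → ℝ) (hρ : Continuous ρ)
    (hρ01 : ∀ t : ℝ, ρ t ∈ Set.Icc (0 : ℝ) 1)
    (hρ0 : ∀ t : ℝ, ρ t = 0 ↔ t ≤ 1 / 3)
    (hρ1 : ∀ t : ℝ, ρ t = 1 ↔ 2 / 3 ≤ t)
    (lam C b : ℝ) (hC0 : 0 < C) (hC : C < 7 / 9) (hlam : 1 < lam)
    (hpos : ∀ θ : Torus n, ∀ v : Fin n → ℝ, v ≠ 0 →
      0 < ∑ i, k i θ * v i ^ 2 +
        b * ∑ p, ∑ q, if p ≠ q then (v p - v q) ^ 2 else 0) :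
    ∃ W : Set (P n), IsCompact W ∧
      ∀ p ∉ W, Kfun n k μ ρ lam C b p ≤ lam * Real.exp (-C) := by
  haveI : Nonempty (Fin n) := ⟨⟨0, hn⟩⟩
  -- the quadratic form is positive on the compact set Torus × sphere
  have hposq : ∀ θ : Torus n, ∀ v : Fin n → ℝ, v ≠ 0 → 0 < qf n k b θ v := by
    intro θ v hv; exact hpos θ v hv
  have hScpt : IsCompact ((Set.univ : Set (Torus n)) ×ˢ
      Metric.sphere (0 : Fin n → ℝ) 1) :=
    isCompact_univ.prod (isCompact_sphere 0 1)
  have hSne : ((Set.univ : Set (Torus n)) ×ˢ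
      Metric.sphere (0 : Fin n → ℝ) 1).Nonempty := by
    refine ⟨(fun _ => 0, fun _ => 1), Set.mem_univ _, ?_⟩
    rw [mem_sphere_zero_iff_norm]
    simpa using (Pi.norm_const (ι := Fin n) (1 : ℝ))
  obtain ⟨⟨θm, vm⟩, hmemS, hminS⟩ :=
    hScpt.exists_isMinOn hSne (qf_cont n k hk b).continuousOn
  set c : ℝ := qf n k b θm vm with hc_def
  have hvm1 : ‖vm‖ = 1 := mem_sphere_zero_iff_norm.mp hmemS.2
  have hc : 0 < c := hposq θm vm (by intro h; rw [h] at hvm1; simp at hvm1)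
  -- a uniform lower bound
  have key : ∀ θ : Torus n, ∀ v : Fin n → ℝ, c * ‖v‖ ^ 2 ≤ qf n k b θ v := by
    intro θ v
    rcases eq_or_ne v 0 with rfl | hv
    · simp [qf]
    · have hnv : (0:ℝ) < ‖v‖ := norm_pos_iff.mpr hv
      set u : Fin n → ℝ := ‖v‖⁻¹ • v with hu_def
      have hu1 : ‖u‖ = 1 := by
        rw [hu_def, norm_smul, norm_inv, norm_norm, inv_mul_cancel₀ hnv.ne']
      have humem : (θ, u) ∈ ((Set.univ : Set (Torus n)) ×ˢ
          Metric.sphere (0 : Fin n → ℝ) 1) :=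
        ⟨Set.mem_univ _, mem_sphere_zero_iff_norm.mpr hu1⟩
      have hcu : c ≤ qf n k b θ u := isMinOn_iff.mp hminS (θ, u) humem
      have hveq : v = ‖v‖ • u := by rw [hu_def, smul_inv_smul₀ hnv.ne']
      calc c * ‖v‖ ^ 2 = ‖v‖ ^ 2 * c := by ring
        _ ≤ ‖v‖ ^ 2 * qf n k b θ u := by
            exact mul_le_mul_of_nonneg_left hcu (by positivity)
        _ = qf n k b θ (‖v‖ • u) := (qf_smul n k b θ _ u).symm
        _ = qf n k b θ v := by rw [← hveq]
  -- choose the radius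
  set M : ℝ := Real.sqrt (2 / c) + 1 with hM_def
  have hM0 : 0 < M := by positivity
  have hM2 : 2 / c < M ^ 2 := by
    have hs : Real.sqrt (2 / c) ^ 2 = 2 / c := Real.sq_sqrt (by positivity)
    nlinarith [Real.sqrt_nonneg (2 / c)]
  have hcM2 : 2 < c * M ^ 2 := by
    have := (div_lt_iff₀ hc).mp hM2
    linarith [this]
  set R : ℝ := M + 2 with hR_def
  refine ⟨(Set.univ.pi fun _ : Fin n => Set.Icc (-R) R) ×ˢ
      ((Set.univ : Set (Torus n)) ×ˢ Set.Icc (-3 : ℝ) 3), ?_, ?_⟩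
  · exact (isCompact_univ_pi fun _ => isCompact_Icc).prod
      (isCompact_univ.prod isCompact_Icc)
  · rintro ⟨r, θ, z⟩ hp
    have hp' : (∃ i, ¬ (r i ∈ Set.Icc (-R) R)) ∨ ¬ (z ∈ Set.Icc (-3:ℝ) 3) := by
      by_contra h
      push_neg at h
      exact hp ⟨fun i _ => h.1 i, Set.mem_univ _, h.2⟩
    -- it suffices to show the exponent is at most -C
    have hlam0 : (0:ℝ) ≤ lam := by linarith
    unfold Kfun
    refine mul_le_mul_of_nonneg_left (Real.exp_le_exp.mpr ?_) hlam0
    simp only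
    have hQeq : Qb2 n k b r θ = qf n k b θ (fun i => r i - 2) := by
      simp only [Qb2, qf, sub_sub_sub_cancel_right]
    by_cases hall : ∀ j, 1/3 < r j
    · -- all r_j > 1/3
      have hPi : 0 ≤ ∏ ℓ, ρ (r ℓ) := Finset.prod_nonneg fun ℓ _ => (hρ01 _).1
      have hS : (1:ℝ)/3 ≤ ∑ j, r j := by
        have h1 : ∑ _j : Fin n, (1:ℝ)/3 ≤ ∑ j, r j :=
          Finset.sum_le_sum fun j _ => (hall j).le
        have h2 : ∑ _j : Fin n, (1:ℝ)/3 = (n : ℝ) * (1/3) := by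
          simp [Finset.sum_const, mul_comm]
        have h3 : (1:ℝ) ≤ (n : ℝ) := by exact_mod_cast hn
        nlinarith
      have hQ0 : 0 ≤ Qb2 n k b r θ := by
        rw [hQeq]
        have := key θ (fun i => r i - 2)
        nlinarith [norm_nonneg (fun i => r i - 2), sq_nonneg ‖fun i => r i - 2‖]
      have hT : 1 + C - Qb2 n k b r θ - (z ^ 2 + μ θ) * ∑ j, r j ≤ 0 := by
        rcases hp' with ⟨i, hi⟩ | hz
        · -- |r i| > R, and r i > 1/3 > -R, so r i > R
          have hRpos : 0 < R := by linarith
          simp only [Set.mem_Icc, not_and_or, not_le] at hi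
          have hri : R < r i := by
            rcases hi with hi | hi
            · linarith [hall i]
            · exact hi
          have hvi : M ≤ |r i - 2| := by
            rw [abs_of_nonneg (by linarith)]; linarith
          have hnv : M ≤ ‖fun j => r j - 2‖ := by
            calc M ≤ |r i - 2| := hvi
              _ = ‖(fun j => r j - 2) i‖ := by simp [Real.norm_eq_abs]
              _ ≤ ‖fun j => r j - 2‖ := norm_le_pi_norm (fun j => r j - 2) i
          have hQbig : 2 < Qb2 n k b r θ := by
            rw [hQeq]
            have h1 : c * M ^ 2 ≤ c * ‖fun j => r j - 2‖ ^ 2 :=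
              mul_le_mul_of_nonneg_left (pow_le_pow_left₀ hM0.le hnv 2) hc.le
            linarith [key θ (fun j => r j - 2)]
          have hzS : 0 ≤ (z ^ 2 + μ θ) * ∑ j, r j :=
            mul_nonneg (add_nonneg (sq_nonneg z) (hμ0 θ)) (by linarith)
          linarith
        · -- |z| > 3
          simp only [Set.mem_Icc, not_and_or, not_le] at hz
          have hz2 : 9 < z ^ 2 := by
            rcases hz with hz | hz <;> nlinarith
          have hμθ : 0 ≤ μ θ := hμ0 θ
          nlinarith [mul_nonneg hμθ (by linarith : (0:ℝ) ≤ ∑ j, r j)]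
      have : (1 + C - Qb2 n k b r θ - (z ^ 2 + μ θ) * ∑ j, r j) * ∏ ℓ, ρ (r ℓ) ≤ 0 :=
        mul_nonpos_iff.mpr (Or.inr ⟨hT, hPi⟩)
      linarith
    · -- some r_j ≤ 1/3, the cutoff product vanishes
      push_neg at hall
      obtain ⟨j, hj⟩ := hall
      have hPi0 : ∏ ℓ, ρ (r ℓ) = 0 :=
        Finset.prod_eq_zero (Finset.mem_univ j) ((hρ0 _).mpr hj)
      rw [hPi0, mul_zero]
      linarith
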